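/- For every dimension d ≥ 3, every ε > 0 and every b > 0 one can find b̃ > b and functions χ₁, χ₂ : ℝ^d → ℝ which are Lipschitz continuous and continuously differentiable outside a closed Lebesgue-null set, such that χ₁(x)² + χ₂(x)² = 1 for all x, χ₁(x) = 1 whenever |x| ≤ b, χ₁(x) = 0 whenever |x| > b̃, and |∇χ₁(x)|² + |∇χ₂(x)|² ≤ ε·|x|⁻² at every point x ≠ 0 at which χ₁ and χ₂ are differentiable. -/

import Mathlib

open MeasureTheory Real Asymptotics Filter

noncomputable section StmtAux

/-- clamp to [0,1] -/
def clamp01 (t : ℝ) : ℝ := max 0 (min 1 t)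

def psiAux (t : ℝ) : ℝ := (clamp01 t) ^ 2 * (3 - 2 * clamp01 t)

def psiAux' (t : ℝ) : ℝ := 6 * clamp01 t * (1 - clamp01 t)

lemma clamp01_of_nonpos {t : ℝ} (h : t ≤ 0) : clamp01 t = 0 := by
  unfold clamp01
  rcases le_total 1 t with h1 | h1 <;> simp [min_eq_left, min_eq_right, h1] <;> linarith

lemma clamp01_of_one_le {t : ℝ} (h : 1 ≤ t) : clamp01 t = 1 := by
  unfold clamp01
  rw [min_eq_left h, max_eq_right (by norm_num)]

lemma clamp01_of_mem {t : ℝ} (h0 : 0 ≤ t) (h1 : t ≤ 1) : clamp01 t = t := by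
  unfold clamp01
  rw [min_eq_right h1, max_eq_right h0]

lemma clamp01_mem (t : ℝ) : 0 ≤ clamp01 t ∧ clamp01 t ≤ 1 := by
  constructor
  · exact le_max_left _ _
  · unfold clamp01
    rcases le_total 1 t with h1 | h1
    · rw [min_eq_left h1]; norm_num
    · rw [min_eq_right h1]
      rcases le_total 0 t with h0 | h0
      · rw [max_eq_right h0]; exact h1
      · rw [max_eq_left h0]; norm_num

lemma continuous_clamp01 : Continuous clamp01 :=
  continuous_const.max (continuous_const.min continuous_id)

lemma continuous_psiAux' : Continuous psiAux' :=
  ((continuous_const.mul continuous_clamp01).mul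
    (continuous_const.sub continuous_clamp01))

lemma psiAux'_bound (t : ℝ) : |psiAux' t| ≤ 3 / 2 := by
  obtain ⟨h0, h1⟩ := clamp01_mem t
  rw [abs_le]
  unfold psiAux'
  constructor <;> nlinarith [sq_nonneg (2 * clamp01 t - 1)]

lemma psiAux_of_nonpos {t : ℝ} (h : t ≤ 0) : psiAux t = 0 := by
  unfold psiAux; rw [clamp01_of_nonpos h]; ring

lemma psiAux_of_one_le {t : ℝ} (h : 1 ≤ t) : psiAux t = 1 := by
  unfold psiAux; rw [clamp01_of_one_le h]; ring

/-- derivative zero from a quadratic bound -/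
lemma hasDerivAt_of_sq_bound (f : ℝ → ℝ) (t M : ℝ)
    (h : ∀ᶠ s in nhds t, |f s - f t| ≤ M * (s - t) ^ 2) : HasDerivAt f 0 t := by
  rw [hasDerivAt_iff_isLittleO]
  have h1 : (fun s => f s - f t - (s - t) • (0 : ℝ)) =O[nhds t] (fun s => (s - t) ^ 2) := by
    refine IsBigO.of_bound (|M|) ?_
    filter_upwards [h] with s hs
    simp only [smul_zero, sub_zero, Real.norm_eq_abs]
    calc |f s - f t| ≤ M * (s - t) ^ 2 := hs
      _ ≤ |M| * |(s - t) ^ 2| := by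
          rw [abs_pow, sq_abs]
          exact mul_le_mul_of_nonneg_right (le_abs_self M) (by positivity)
  have h2 : (fun s : ℝ => (s - t) ^ 2) =o[nhds t] (fun s => s - t) := by
    rw [Asymptotics.isLittleO_iff]
    intro c hc
    have : ∀ᶠ s in nhds t, |s - t| ≤ c := by
      have : Metric.closedBall t c ∈ nhds t := Metric.closedBall_mem_nhds t hc
      filter_upwards [this] with s hs
      simpa [Real.dist_eq] using hs
    filter_upwards [this] with s hs
    have e : ‖(s - t) ^ 2‖ = |s - t| * |s - t| := by
      rw [Real.norm_eq_abs, abs_pow, sq]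
    rw [e, Real.norm_eq_abs]
    exact mul_le_mul_of_nonneg_right hs (abs_nonneg _)
  exact h1.trans_isLittleO h2

lemma hasDerivAt_psiAux (t : ℝ) : HasDerivAt psiAux (psiAux' t) t := by
  rcases lt_trichotomy t 0 with ht | rfl | ht
  · -- t < 0 : locally zero
    have he : psiAux =ᶠ[nhds t] fun _ => 0 := by
      filter_upwards [eventually_lt_nhds ht] with s hs
      exact psiAux_of_nonpos hs.le
    have : HasDerivAt (fun _ : ℝ => (0 : ℝ)) 0 t := hasDerivAt_const t 0
    have h := this.congr_of_eventuallyEq he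
    simpa [psiAux', clamp01_of_nonpos ht.le] using h
  · -- t = 0
    have h0 : psiAux' 0 = 0 := by simp [psiAux', clamp01_of_nonpos le_rfl]
    rw [h0]
    apply hasDerivAt_of_sq_bound psiAux 0 3
    filter_upwards [Metric.ball_mem_nhds (0 : ℝ) one_pos] with s hs
    rw [Metric.mem_ball, Real.dist_eq, sub_zero] at hs
    rw [psiAux_of_nonpos le_rfl, sub_zero, sub_zero]
    rcases le_or_gt s 0 with h | h
    · rw [psiAux_of_nonpos h, abs_zero]; positivity
    · have h1 : s ≤ 1 := by rw [abs_lt] at hs; linarith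
      unfold psiAux
      rw [clamp01_of_mem h.le h1, abs_of_nonneg (by nlinarith)]
      nlinarith
  · rcases lt_trichotomy t 1 with ht1 | rfl | ht1
    · -- 0 < t < 1 : locally the cubic
      have hq : HasDerivAt (fun s : ℝ => s ^ 2 * (3 - 2 * s)) (6 * t * (1 - t)) t := by
        have h1 : HasDerivAt (fun s : ℝ => s ^ 2) (2 * t) t := by
          simpa using hasDerivAt_pow 2 t
        have h2 : HasDerivAt (fun s : ℝ => 3 - 2 * s) (-2) t := by
          simpa using ((hasDerivAt_id t).const_mul (2:ℝ)).const_sub 3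
        have := h1.mul h2
        refine this.congr_deriv ?_
        ring
      have he : psiAux =ᶠ[nhds t] fun s => s ^ 2 * (3 - 2 * s) := by
        filter_upwards [eventually_gt_nhds ht, eventually_lt_nhds ht1] with s hs0 hs1
        unfold psiAux
        rw [clamp01_of_mem hs0.le hs1.le]
      have h := hq.congr_of_eventuallyEq he
      simpa [psiAux', clamp01_of_mem ht.le ht1.le] using h
    · -- t = 1
      have h0 : psiAux' 1 = 0 := by simp [psiAux', clamp01_of_one_le le_rfl]
      rw [h0]
      apply hasDerivAt_of_sq_bound psiAux 1 3
      filter_upwards [Metric.ball_mem_nhds (1 : ℝ) one_pos] with s hs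
      rw [Metric.mem_ball, Real.dist_eq] at hs
      rw [psiAux_of_one_le le_rfl]
      rcases le_or_gt 1 s with h | h
      · rw [psiAux_of_one_le h]; simp; positivity
      · have h0 : 0 ≤ s := by rw [abs_lt] at hs; linarith
        unfold psiAux
        rw [clamp01_of_mem h0 h.le, abs_le]
        constructor <;> nlinarith
    · -- t > 1 : locally one
      have he : psiAux =ᶠ[nhds t] fun _ => 1 := by
        filter_upwards [eventually_gt_nhds ht1] with s hs
        exact psiAux_of_one_le hs.le
      have : HasDerivAt (fun _ : ℝ => (1 : ℝ)) 0 t := hasDerivAt_const t 1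
      have h := this.congr_of_eventuallyEq he
      simpa [psiAux', clamp01_of_one_le ht1.le] using h

lemma contDiff_psiAux : ContDiff ℝ 1 psiAux := by
  rw [contDiff_one_iff_deriv]
  refine ⟨fun t => (hasDerivAt_psiAux t).differentiableAt, ?_⟩
  have : deriv psiAux = psiAux' := funext fun t => (hasDerivAt_psiAux t).deriv
  rw [this]
  exact continuous_psiAux'

end StmtAux

theorem stmt_0 (d : ℕ) (hd : 3 ≤ d) (ε b : ℝ) (hε : 0 < ε) (hb : 0 < b) :
    ∃ (btil : ℝ) (χ₁ χ₂ : EuclideanSpace ℝ (Fin d) → ℝ)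
      (S : Set (EuclideanSpace ℝ (Fin d))),
      b < btil ∧
      (∃ K : NNReal, LipschitzWith K χ₁) ∧
      (∃ K : NNReal, LipschitzWith K χ₂) ∧
      IsClosed S ∧ volume S = 0 ∧
      ContDiffOn ℝ 1 χ₁ Sᶜ ∧ ContDiffOn ℝ 1 χ₂ Sᶜ ∧
      (∀ x, χ₁ x ^ 2 + χ₂ x ^ 2 = 1) ∧
      (∀ x, ‖x‖ ≤ b → χ₁ x = 1) ∧
      (∀ x, btil < ‖x‖ → χ₁ x = 0) ∧
      (∀ x : EuclideanSpace ℝ (Fin d), x ≠ 0 →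
        DifferentiableAt ℝ χ₁ x → DifferentiableAt ℝ χ₂ x →
        ‖fderiv ℝ χ₁ x‖ ^ 2 + ‖fderiv ℝ χ₂ x‖ ^ 2 ≤ ε / ‖x‖ ^ 2) := by
  have hsε : 0 < Real.sqrt ε := Real.sqrt_pos.2 hε
  set L : ℝ := 3 * π / (4 * Real.sqrt ε) with hLdef
  have hL : 0 < L := by
    apply div_pos (by positivity) (by positivity)
  -- the radial profile
  set g : ℝ → ℝ := fun r => π / 2 * psiAux (Real.log (r / b) / L) with hgdef
  set g' : ℝ → ℝ := fun r =>
    if r = 0 then 0 else π / 2 * (psiAux' (Real.log (r / b) / L) * (r⁻¹ / L)) with hg'def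
  -- g vanishes for |r| ≤ b
  have hg0 : ∀ r : ℝ, |r| ≤ b → g r = 0 := by
    intro r hr
    have hlog : Real.log (r / b) ≤ 0 := by
      rw [← Real.log_abs, abs_div, abs_of_pos hb]
      exact Real.log_nonpos (by positivity) ((div_le_one hb).2 hr)
    have : Real.log (r / b) / L ≤ 0 := div_nonpos_iff.2 (Or.inr ⟨hlog, hL.le⟩)
    simp [hgdef, psiAux_of_nonpos this]
  -- g is π/2 for r > b * exp L
  have hg1 : ∀ r : ℝ, b * Real.exp L < r → g r = π / 2 := by
    intro r hr
    have hrpos : 0 < r := lt_trans (by positivity) hr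
    have hll : L < Real.log (r / b) := by
      rw [Real.lt_log_iff_exp_lt (by positivity)]
      rw [lt_div_iff₀ hb]
      linarith [hr]
    have : 1 ≤ Real.log (r / b) / L := (one_le_div hL).2 hll.le
    simp [hgdef, psiAux_of_one_le this]
  -- derivative of g
  have hgderiv : ∀ r : ℝ, HasDerivAt g (g' r) r := by
    intro r
    rcases eq_or_ne r 0 with rfl | hr
    · -- locally zero near 0
      have he : g =ᶠ[nhds (0 : ℝ)] fun _ => 0 := by
        filter_upwards [Metric.ball_mem_nhds (0 : ℝ) hb] with s hs
        rw [Metric.mem_ball, Real.dist_eq, sub_zero] at hs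
        exact hg0 s hs.le
      have h := (hasDerivAt_const (0:ℝ) (0:ℝ)).congr_of_eventuallyEq he
      simpa [hg'def] using h
    · have h1 : HasDerivAt (fun s : ℝ => s / b) (1 / b) r := by
        simpa using (hasDerivAt_id r).div_const b
      have h2 := (Real.hasDerivAt_log (div_ne_zero hr hb.ne')).comp r h1
      have h2' : HasDerivAt (fun s : ℝ => Real.log (s / b)) r⁻¹ r := by
        refine h2.congr_deriv ?_
        field_simp
      have h3 : HasDerivAt (fun s : ℝ => Real.log (s / b) / L) (r⁻¹ / L) r := h2'.div_const L
      have h4 := (hasDerivAt_psiAux (Real.log (r / b) / L)).comp r h3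
      have h5 := HasDerivAt.const_mul (π / 2) h4
      have : g' r = π / 2 * (psiAux' (Real.log (r / b) / L) * (r⁻¹ / L)) := by
        simp [hg'def, hr]
      rw [this]
      exact h5
  -- the key bound: 3π/(4L) = √ε
  have hCval : 3 * π / (4 * L) = Real.sqrt ε := by
    rw [hLdef]
    field_simp
  -- bound for positive r
  have hg'bound : ∀ r : ℝ, 0 < r → |g' r| ≤ Real.sqrt ε / r := by
    intro r hr
    have : g' r = π / 2 * (psiAux' (Real.log (r / b) / L) * (r⁻¹ / L)) := by
      simp [hg'def, hr.ne']
    rw [this, abs_mul, abs_mul, abs_of_pos (by positivity : (0:ℝ) < π / 2),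
      abs_of_pos (by positivity : (0:ℝ) < r⁻¹ / L)]
    have hb1 := psiAux'_bound (Real.log (r / b) / L)
    calc π / 2 * (|psiAux' (Real.log (r / b) / L)| * (r⁻¹ / L))
        ≤ π / 2 * (3 / 2 * (r⁻¹ / L)) := by
          apply mul_le_mul_of_nonneg_left _ (by positivity)
          exact mul_le_mul_of_nonneg_right hb1 (by positivity)
      _ = 3 * π / (4 * L) / r := by field_simp; ring
      _ = Real.sqrt ε / r := by rw [hCval]
  -- global bound (for Lipschitz)
  have hg'glob : ∀ r : ℝ, |g' r| ≤ Real.sqrt ε / b := by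
    intro r
    rcases lt_trichotomy r 0 with hr | rfl | hr
    · -- negative r: same formula via |r|
      have : g' r = π / 2 * (psiAux' (Real.log (r / b) / L) * (r⁻¹ / L)) := by
        simp [hg'def, hr.ne]
      rcases le_or_gt b (-r) with hcase | hcase
      · rw [this, abs_mul, abs_mul, abs_of_pos (by positivity : (0:ℝ) < π / 2)]
        have hb1 := psiAux'_bound (Real.log (r / b) / L)
        have habs : |r⁻¹ / L| = (-r)⁻¹ / L := by
          rw [abs_div, abs_inv, abs_of_neg hr, abs_of_pos hL]
        rw [habs]
        have hinv : (-r)⁻¹ ≤ b⁻¹ := by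
          apply inv_anti₀ hb hcase
        calc π / 2 * (|psiAux' (Real.log (r / b) / L)| * ((-r)⁻¹ / L))
            ≤ π / 2 * (3 / 2 * (b⁻¹ / L)) := by
              apply mul_le_mul_of_nonneg_left _ (by positivity)
              refine mul_le_mul hb1 (div_le_div_of_nonneg_right hinv hL.le) ?_ (by norm_num)
              exact div_nonneg (inv_nonneg.2 (by linarith)) hL.le
          _ = 3 * π / (4 * L) / b := by field_simp; ring
          _ = Real.sqrt ε / b := by rw [hCval]
      · -- |r| < b : derivative is zero
        have hlog : Real.log (r / b) ≤ 0 := by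
          rw [← Real.log_abs, abs_div, abs_of_pos hb]
          apply Real.log_nonpos (by positivity)
          rw [div_le_one hb, abs_of_neg hr]
          exact hcase.le
        have hcl : Real.log (r / b) / L ≤ 0 := div_nonpos_iff.2 (Or.inr ⟨hlog, hL.le⟩)
        have : psiAux' (Real.log (r / b) / L) = 0 := by
          simp [psiAux', clamp01_of_nonpos hcl]
        rw [hg'def]
        simp only [if_neg hr.ne, this]
        simp
        positivity
    · simp [hg'def]; positivity
    · rcases le_or_gt b r with hcase | hcase
      · calc |g' r| ≤ Real.sqrt ε / r := hg'bound r hr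
          _ ≤ Real.sqrt ε / b := by
            apply div_le_div_of_nonneg_left hsε.le hb hcase
      · have hlog : Real.log (r / b) ≤ 0 :=
          Real.log_nonpos (by positivity) ((div_le_one hb).2 hcase.le)
        have hcl : Real.log (r / b) / L ≤ 0 := div_nonpos_iff.2 (Or.inr ⟨hlog, hL.le⟩)
        have : psiAux' (Real.log (r / b) / L) = 0 := by
          simp [psiAux', clamp01_of_nonpos hcl]
        rw [hg'def]
        simp only [if_neg hr.ne', this]
        simp
        positivity
  -- the cutoff functions
  set φ₁ : ℝ → ℝ := fun r => Real.cos (g r) with hφ₁def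
  set φ₂ : ℝ → ℝ := fun r => Real.sin (g r) with hφ₂def
  have hφ₁deriv : ∀ r, HasDerivAt φ₁ (-Real.sin (g r) * g' r) r := fun r => (hgderiv r).cos
  have hφ₂deriv : ∀ r, HasDerivAt φ₂ (Real.cos (g r) * g' r) r := fun r => (hgderiv r).sin
  -- Lipschitz constants for φ₁, φ₂
  have hKnn : (0:ℝ) ≤ Real.sqrt ε / b := by positivity
  have hφ₁lip : LipschitzWith (Real.toNNReal (Real.sqrt ε / b)) φ₁ := by
    apply lipschitzWith_of_nnnorm_deriv_le (fun r => (hφ₁deriv r).differentiableAt)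
    intro r
    rw [← NNReal.coe_le_coe, coe_nnnorm, Real.coe_toNNReal _ hKnn,
      (hφ₁deriv r).deriv, Real.norm_eq_abs, abs_mul]
    calc |(-Real.sin (g r))| * |g' r| ≤ 1 * (Real.sqrt ε / b) := by
          apply mul_le_mul _ (hg'glob r) (abs_nonneg _) zero_le_one
          rw [abs_neg]; exact Real.abs_sin_le_one _
      _ = Real.sqrt ε / b := one_mul _
  have hφ₂lip : LipschitzWith (Real.toNNReal (Real.sqrt ε / b)) φ₂ := by
    apply lipschitzWith_of_nnnorm_deriv_le (fun r => (hφ₂deriv r).differentiableAt)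
    intro r
    rw [← NNReal.coe_le_coe, coe_nnnorm, Real.coe_toNNReal _ hKnn,
      (hφ₂deriv r).deriv, Real.norm_eq_abs, abs_mul]
    calc |Real.cos (g r)| * |g' r| ≤ 1 * (Real.sqrt ε / b) :=
          mul_le_mul (Real.abs_cos_le_one _) (hg'glob r) (abs_nonneg _) zero_le_one
      _ = Real.sqrt ε / b := one_mul _
  -- C¹ smoothness of φ₁, φ₂ away from 0
  have hgC1 : ∀ r : ℝ, r ≠ 0 → ContDiffAt ℝ 1 g r := by
    intro r hr
    have hlog : ContDiffAt ℝ 1 (fun s : ℝ => Real.log (s / b) / L) r := by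
      apply ContDiffAt.div_const
      apply ContDiffAt.comp (g := Real.log) (f := fun s : ℝ => s / b)
      · exact Real.contDiffAt_log.2 (div_ne_zero hr hb.ne')
      · exact (contDiffAt_id).div_const b
    exact contDiffAt_const.mul ((contDiff_psiAux.contDiffAt).comp r hlog)
  have hφC1 : ∀ (r : ℝ), r ≠ 0 →
      ContDiffAt ℝ 1 φ₁ r ∧ ContDiffAt ℝ 1 φ₂ r := by
    intro r hr
    exact ⟨(Real.contDiff_cos.contDiffAt).comp r (hgC1 r hr),
      (Real.contDiff_sin.contDiffAt).comp r (hgC1 r hr)⟩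
  -- near zero φᵢ is locally constant
  have hφ₁near0 : ∀ᶠ r in nhds (0:ℝ), φ₁ r = 1 := by
    filter_upwards [Metric.ball_mem_nhds (0 : ℝ) hb] with s hs
    rw [Metric.mem_ball, Real.dist_eq, sub_zero] at hs
    simp [hφ₁def, hg0 s hs.le]
  have hφ₂near0 : ∀ᶠ r in nhds (0:ℝ), φ₂ r = 0 := by
    filter_upwards [Metric.ball_mem_nhds (0 : ℝ) hb] with s hs
    rw [Metric.mem_ball, Real.dist_eq, sub_zero] at hs
    simp [hφ₂def, hg0 s hs.le]
  -- now set things up on the Euclidean space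
  refine ⟨b * Real.exp L, fun x => φ₁ ‖x‖, fun x => φ₂ ‖x‖, ({0} : Set _), ?_, ?_, ?_, ?_, ?_,
    ?_, ?_, ?_, ?_, ?_, ?_⟩
  · -- b < btil
    nlinarith [Real.one_lt_exp_iff.2 hL, hb]
  · exact ⟨_, hφ₁lip.comp lipschitzWith_one_norm⟩
  · exact ⟨_, hφ₂lip.comp lipschitzWith_one_norm⟩
  · exact isClosed_singleton
  · haveI : Nonempty (Fin d) := ⟨⟨0, by omega⟩⟩
    exact measure_singleton 0
  · -- ContDiffOn χ₁
    intro x hx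
    rw [Set.mem_compl_iff, Set.mem_singleton_iff] at hx
    apply ContDiffAt.contDiffWithinAt
    have hnx : ‖x‖ ≠ 0 := norm_ne_zero_iff.2 hx
    exact ((hφC1 ‖x‖ hnx).1).comp x (contDiffAt_norm ℝ hx)
  · intro x hx
    rw [Set.mem_compl_iff, Set.mem_singleton_iff] at hx
    apply ContDiffAt.contDiffWithinAt
    have hnx : ‖x‖ ≠ 0 := norm_ne_zero_iff.2 hx
    exact ((hφC1 ‖x‖ hnx).2).comp x (contDiffAt_norm ℝ hx)
  · intro x
    simp only [hφ₁def, hφ₂def]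
    rw [add_comm]
    exact Real.sin_sq_add_cos_sq _
  · intro x hx
    simp [hφ₁def, hg0 ‖x‖ (by rwa [abs_of_nonneg (norm_nonneg x)])]
  · intro x hx
    simp [hφ₁def, hg1 ‖x‖ hx]
  · -- the gradient bound
    intro x hx _ _
    have hr : 0 < ‖x‖ := norm_pos_iff.2 hx
    have hnormdiff : DifferentiableAt ℝ (fun y : EuclideanSpace ℝ (Fin d) => ‖y‖) x :=
      (contDiffAt_norm ℝ (n := 1) hx).differentiableAt one_ne_zero
    set N := fderiv ℝ (fun y : EuclideanSpace ℝ (Fin d) => ‖y‖) x with hNdef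
    have hN : HasFDerivAt (fun y : EuclideanSpace ℝ (Fin d) => ‖y‖) N x :=
      hnormdiff.hasFDerivAt
    have hNle : ‖N‖ ≤ 1 := by
      have := norm_fderiv_le_of_lipschitz ℝ (lipschitzWith_one_norm
        (E := EuclideanSpace ℝ (Fin d))) (x₀ := x)
      simpa using this
    have hD1 : HasFDerivAt (fun y : EuclideanSpace ℝ (Fin d) => φ₁ ‖y‖)
        ((-Real.sin (g ‖x‖) * g' ‖x‖) • N) x :=
      (hφ₁deriv ‖x‖).comp_hasFDerivAt x hN
    have hD2 : HasFDerivAt (fun y : EuclideanSpace ℝ (Fin d) => φ₂ ‖y‖)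
        ((Real.cos (g ‖x‖) * g' ‖x‖) • N) x :=
      (hφ₂deriv ‖x‖).comp_hasFDerivAt x hN
    rw [hD1.fderiv, hD2.fderiv, norm_smul, norm_smul]
    have hgb := hg'bound ‖x‖ hr
    have hsc := Real.sin_sq_add_cos_sq (g ‖x‖)
    have hNnn : (0:ℝ) ≤ ‖N‖ := norm_nonneg _
    have hsqrt : Real.sqrt ε ^ 2 = ε := Real.sq_sqrt hε.le
    have h1 : ‖(-Real.sin (g ‖x‖) * g' ‖x‖ : ℝ)‖ = |Real.sin (g ‖x‖)| * |g' ‖x‖| := by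
      rw [Real.norm_eq_abs, abs_mul, abs_neg]
    have h2 : ‖(Real.cos (g ‖x‖) * g' ‖x‖ : ℝ)‖ = |Real.cos (g ‖x‖)| * |g' ‖x‖| := by
      rw [Real.norm_eq_abs, abs_mul]
    rw [h1, h2]
    have key : (|Real.sin (g ‖x‖)| * |g' ‖x‖| * ‖N‖) ^ 2
        + (|Real.cos (g ‖x‖)| * |g' ‖x‖| * ‖N‖) ^ 2
        ≤ (Real.sqrt ε / ‖x‖) ^ 2 := by
      have e1 : (|Real.sin (g ‖x‖)| * |g' ‖x‖| * ‖N‖) ^ 2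
          + (|Real.cos (g ‖x‖)| * |g' ‖x‖| * ‖N‖) ^ 2
          = (Real.sin (g ‖x‖) ^ 2 + Real.cos (g ‖x‖) ^ 2) * (|g' ‖x‖| * ‖N‖) ^ 2 := by
        simp only [mul_pow, sq_abs]
        ring
      rw [e1, hsc, one_mul]
      have : |g' ‖x‖| * ‖N‖ ≤ Real.sqrt ε / ‖x‖ := by
        calc |g' ‖x‖| * ‖N‖ ≤ (Real.sqrt ε / ‖x‖) * 1 :=
              mul_le_mul hgb hNle hNnn (by positivity)
          _ = Real.sqrt ε / ‖x‖ := mul_one _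
      exact pow_le_pow_left₀ (by positivity) this 2
    calc (|Real.sin (g ‖x‖)| * |g' ‖x‖| * ‖N‖) ^ 2
        + (|Real.cos (g ‖x‖)| * |g' ‖x‖| * ‖N‖) ^ 2
        ≤ (Real.sqrt ε / ‖x‖) ^ 2 := key
      _ = ε / ‖x‖ ^ 2 := by rw [div_pow, hsqrt]
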